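/- Let E and H be abelian groups, let G ⊆ E be a subgroup, and let π : E → H be a surjective group homomorphism with kernel G, so that 0 → G → E → H → 0 is exact. Assume this extension is pure: for every finitely generated subgroup H' ⊆ H there is a homomorphism θ' : H' → E with π ∘ θ' equal to the inclusion of H' into H. Assume moreover that G carries the structure of a partially ordered abelian group with order unit u which is tracially approximately divisible. Let h_1, …, h_{n+1} ∈ H, let H_n be the subgroup of H generated by {h_1, …, h_n} and H_{n+1} the subgroup generated by {h_1, …, h_{n+1}}. Then for any ε > 0 and any homomorphism θ_n : H_n → E with π ∘ θ_n equal to the inclusion of H_n into H, there exists a homomorphism θ_{n+1} : H_{n+1} → E with π ∘ θ_{n+1} equal to the inclusion of H_{n+1} into H, such that for each 1 ≤ i ≤ n the element θ_{n+1}(h_i) − θ_n(h_i) lies in G and satisfies |τ(θ_{n+1}(h_i) − θ_n(h_i))| < ε for every state τ of (G, u). -/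

import Mathlib

/-- A state of a partially ordered abelian group `G` with order unit `u`:
an additive homomorphism `τ : G → ℝ` which is positive and normalized at `u`. -/
def IsPOGroupState {G : Type*} [AddCommGroup G] [PartialOrder G] (u : G)
    (τ : G →+ ℝ) : Prop :=
  (∀ g : G, 0 ≤ g → 0 ≤ τ g) ∧ τ u = 1

/-- `G` (with order unit `u`) is tracially approximately divisible if for every `a ∈ G`,
`ε > 0` and `n ≥ 1` there exists `b ∈ G` with `|τ (a - n • b)| ≤ ε` for every state `τ`. -/
def TraciallyApproxDivisible {G : Type*} [AddCommGroup G] [PartialOrder G] (u : G) : Prop :=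
  ∀ a : G, ∀ ε : ℝ, 0 < ε → ∀ n : ℕ, 1 ≤ n → ∃ b : G,
    ∀ τ : G →+ ℝ, IsPOGroupState u τ → |τ (a - n • b)| ≤ ε

/-- Lemma `smalltrace`: given a pure extension `0 → G → E → H → 0` with
`G` a tracially approximately divisible partially ordered abelian group with order unit,
any partial splitting map `θ_n` on the subgroup generated by `h₁, …, h_n` extends, after
correction, to a partial splitting map `θ_{n+1}` on the subgroup generated by
`h₁, …, h_{n+1}` such that `θ_{n+1}(h i) - θ_n(h i)` lies in `G` and has state values of
absolute value `< ε` for all `1 ≤ i ≤ n`. -/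
lemma hom_real_torsion {A : Type*} [AddCommGroup A] (ρ : A →+ ℝ)
    (t : A) (N : ℕ) (hN : 0 < N) (ht : N • t = 0) : ρ t = 0 := by
  have h1 : (N : ℝ) * ρ t = 0 := by
    rw [← nsmul_eq_mul, ← map_nsmul, ht, map_zero]
  rcases mul_eq_zero.mp h1 with h | h
  · exact absurd h (Nat.cast_ne_zero.mpr hN.ne')
  · exact h

lemma directSum_torsion {ι : Type} [Fintype ι] (p e : ι → ℕ)
    (hp : ∀ i, (p i).Prime) (t : DirectSum ι fun i => ZMod (p i ^ e i)) :
    ∃ N : ℕ, 0 < N ∧ N • t = 0 := by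
  classical
  refine ⟨∏ i, p i ^ e i, Finset.prod_pos (fun i _ => pow_pos (hp i).pos _), ?_⟩
  have hsa : ∀ (m : ℕ) (s : DirectSum ι fun i => ZMod (p i ^ e i)) (i : ι), (m • s) i = m • (s i) := by
    intro m
    induction m with
    | zero => intro s i; simp
    | succ m ih => intro s i; rw [succ_nsmul, succ_nsmul, DirectSum.add_apply, ih]
  refine DFinsupp.ext fun i => ?_
  rw [hsa, DFinsupp.zero_apply, nsmul_eq_mul]
  have : ((∏ j, p j ^ e j : ℕ) : ZMod (p i ^ e i)) = 0 := by
    rw [ZMod.natCast_eq_zero_iff]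
    exact Finset.dvd_prod_of_mem (fun j => p j ^ e j) (Finset.mem_univ i)
  rw [this, zero_mul]

lemma key_construction {Γ : Type*} [AddCommGroup Γ] [PartialOrder Γ] (u : Γ)
    (hdiv : TraciallyApproxDivisible u) {r : ℕ} {ι : Type} [Fintype ι] {p e : ι → ℕ}
    (hp : ∀ i, (p i).Prime)
    (Ψ : ((Fin r →₀ ℤ) × (DirectSum ι fun i => ZMod (p i ^ e i))) →+ Γ)
    (k : ℕ) (hk : 1 ≤ k) (ε₀ : ℝ) (hε₀ : 0 < ε₀) :
    ∃ A B : ((Fin r →₀ ℤ) × (DirectSum ι fun i => ZMod (p i ^ e i))) →+ Γ,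
      (∀ z, A z = Ψ z - k • B z) ∧
      ∀ z, ∀ τ : Γ →+ ℝ, IsPOGroupState u τ →
        |τ (A z)| ≤ (z.1.sum fun _ m => m.natAbs) * ε₀ := by
  classical
  have hb : ∀ l : Fin r, ∃ b : Γ, ∀ τ : Γ →+ ℝ, IsPOGroupState u τ →
      |τ (Ψ (Finsupp.single l 1, 0) - k • b)| ≤ ε₀ :=
    fun l => hdiv _ ε₀ hε₀ k hk
  choose b hbspec using hb
  set v : Fin r → Γ := fun l => Ψ (Finsupp.single l 1, 0) - k • b l with hv
  set ΨT : (DirectSum ι fun i => ZMod (p i ^ e i)) →+ Γ :=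
    Ψ.comp (AddMonoidHom.inr _ _) with hΨT
  set Lv : (Fin r →₀ ℤ) →+ Γ := Finsupp.liftAddHom (fun l => zmultiplesHom Γ (v l)) with hLv
  set Lb : (Fin r →₀ ℤ) →+ Γ := Finsupp.liftAddHom (fun l => zmultiplesHom Γ (b l)) with hLb
  set A : _ →+ Γ := Lv.coprod ΨT with hA
  set B : _ →+ Γ := Lb.comp (AddMonoidHom.fst (Fin r →₀ ℤ) (DirectSum ι fun i => ZMod (p i ^ e i))) with hB
  have hPadd : ∀ z w, (A z = Ψ z - k • B z) → (A w = Ψ w - k • B w) →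
      A (z + w) = Ψ (z + w) - k • B (z + w) := by
    intro z w hz hw
    rw [map_add, map_add, map_add, hz, hw, smul_add]
    abel
  have hP0t : ∀ t, A (0, t) = Ψ (0, t) - k • B (0, t) := by
    intro t
    have h1 : A (0, t) = Ψ (0, t) := by
      simp [hA, AddMonoidHom.coprod_apply, hΨT]
    have h2 : B (0, t) = 0 := by simp [hB]
    rw [h1, h2, smul_zero, sub_zero]
  have hPsingle : ∀ (l : Fin r) (m : ℤ),
      A (Finsupp.single l m, 0) = Ψ (Finsupp.single l m, 0) - k • B (Finsupp.single l m, 0) := by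
    intro l m
    have h1 : A (Finsupp.single l m, 0) = m • v l := by
      simp [hA, AddMonoidHom.coprod_apply, hΨT, hLv, Finsupp.liftAddHom_apply_single]
      exact map_zero Ψ
    have h2 : B (Finsupp.single l m, 0) = m • b l := by
      simp [hB, hLb, Finsupp.liftAddHom_apply_single]
    have h3 : Ψ (Finsupp.single l m, 0) = m • Ψ (Finsupp.single l 1, 0) := by
      rw [← map_zsmul]
      congr 1
      rw [Prod.smul_mk, Finsupp.smul_single, smul_zero]
      norm_num
    have h4 : m • (k • b l) = k • (m • b l) := by
      rw [← natCast_zsmul (b l) k, ← natCast_zsmul (m • b l) k, smul_smul, smul_smul, mul_comm]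
    rw [h1, h2, h3, hv]
    simp only [smul_sub]
    rw [h4]
  have hPf0 : ∀ f : Fin r →₀ ℤ, A (f, 0) = Ψ (f, 0) - k • B (f, 0) := by
    intro f
    induction f using Finsupp.induction_linear with
    | zero => exact hP0t 0
    | add f g ihf ihg =>
      have := hPadd (f, 0) (g, 0) ihf ihg
      simpa using this
    | single l m => exact hPsingle l m
  refine ⟨A, B, ?_, ?_⟩
  · rintro ⟨f, t⟩
    have hsplit : ((f, t) : (Fin r →₀ ℤ) × _) = (f, 0) + (0, t) := by simp
    rw [hsplit]
    exact hPadd _ _ (hPf0 f) (hP0t t)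
  · rintro ⟨f, t⟩ τ hτ
    have htor : τ (ΨT t) = 0 := by
      obtain ⟨N, hN, hNt⟩ := directSum_torsion p e hp t
      exact hom_real_torsion (τ.comp ΨT) t N hN hNt
    have hAft : A (f, t) = Lv f + ΨT t := by
      simp [hA, AddMonoidHom.coprod_apply]
    rw [hAft, map_add, htor, add_zero]
    have hLvf : τ (Lv f) = f.sum fun l m => (m : ℝ) * τ (v l) := by
      rw [hLv, Finsupp.liftAddHom_apply, map_finsuppSum]
      refine Finsupp.sum_congr fun l _ => ?_
      rw [zmultiplesHom_apply, map_zsmul, zsmul_eq_mul]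
    rw [hLvf]
    have hbound : ∀ l ∈ f.support, |(f l : ℝ) * τ (v l)| ≤ ((f l).natAbs : ℝ) * ε₀ := by
      intro l _
      rw [abs_mul]
      have h6 : |((f l : ℤ) : ℝ)| = ((f l).natAbs : ℝ) := by
        rw [← Int.cast_abs, Int.abs_eq_natAbs, Int.cast_natCast]
      rw [h6]
      exact mul_le_mul_of_nonneg_left (hbspec l τ hτ) (Nat.cast_nonneg _)
    calc |Finsupp.sum f fun l m => (m : ℝ) * τ (v l)|
        ≤ f.support.sum (fun l => |(f l : ℝ) * τ (v l)|) := by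
          rw [Finsupp.sum]; exact Finset.abs_sum_le_sum_abs _ _
      _ ≤ f.support.sum (fun l => ((f l).natAbs : ℝ) * ε₀) := Finset.sum_le_sum hbound
      _ = ((f.sum fun _ m => m.natAbs : ℕ) : ℝ) * ε₀ := by
          rw [Finsupp.sum, ← Finset.sum_mul, Nat.cast_sum]

theorem smalltrace_aux {E H : Type*} [AddCommGroup E] [AddCommGroup H]
    (G : AddSubgroup E) [PartialOrder ↥G] (u : ↥G)
    (hdiv : TraciallyApproxDivisible u)
    (π : E →+ H) (hker : π.ker = G)
    (Hn Hn1 : AddSubgroup H) (hle : Hn ≤ Hn1) (hlast : H) (hlast_mem : hlast ∈ Hn1)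
    (hgen : ∀ w ∈ Hn1, ∃ (z : ↥Hn × ℤ), ((z.1 : H) + z.2 • hlast = w))
    (hfgn : AddGroup.FG ↥Hn)
    (θ' : ↥Hn1 →+ E) (hθ' : ∀ x : ↥Hn1, π (θ' x) = (x : H))
    (θn : ↥Hn →+ E) (hθn : ∀ w : ↥Hn, π (θn w) = (w : H))
    (N : ℕ) (y : Fin N → ↥Hn) (ε : ℝ) (hε : 0 < ε) :
    ∃ θn1 : ↥Hn1 →+ E, (∀ x, π (θn1 x) = (x : H)) ∧
      ∀ i : Fin N, ∃ g : ↥G,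
        θn1 (AddSubgroup.inclusion hle (y i)) - θn (y i) = (g : E) ∧
        ∀ τ : ↥G →+ ℝ, IsPOGroupState u τ → |τ g| < ε := by
  classical
  -- the difference homomorphism ψ
  set ψE : ↥Hn →+ E := θ'.comp (AddSubgroup.inclusion hle) - θn with hψE
  have hψEapp : ∀ w : ↥Hn, ψE w = θ' (AddSubgroup.inclusion hle w) - θn w := fun w => rfl
  have hψmem : ∀ w : ↥Hn, ψE w ∈ G := by
    intro w
    rw [← hker, AddMonoidHom.mem_ker]
    have h1 : π (θ' (AddSubgroup.inclusion hle w)) = (w : H) := by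
      rw [hθ']
      rfl
    rw [hψEapp, map_sub, h1, hθn, sub_self]
  set ψG : ↥Hn →+ ↥G := ψE.codRestrict G hψmem with hψG
  have hψGcoe : ∀ w, (ψG w : E) = ψE w := fun w => rfl
  -- the subgroup of multiples of hlast lying in Hn
  set S : AddSubgroup ℤ :=
    { carrier := { m : ℤ | m • hlast ∈ Hn }
      zero_mem' := by
        simp only [Set.mem_setOf_eq, zero_zsmul]
        exact AddSubgroup.zero_mem _
      add_mem' := fun {a b} ha hb => by
        simp only [Set.mem_setOf_eq, add_zsmul] at *
        exact AddSubgroup.add_mem _ ha hb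
      neg_mem' := fun {a} ha => by
        simp only [Set.mem_setOf_eq, neg_zsmul] at *
        exact AddSubgroup.neg_mem _ ha } with hS
  obtain ⟨a0, ha0⟩ := Int.subgroup_cyclic S
  set k : ℕ := a0.natAbs with hkdef
  have hSmem : ∀ m : ℤ, m ∈ S ↔ a0 ∣ m := by
    intro m
    rw [ha0, AddSubgroup.mem_closure_singleton]
    constructor
    · rintro ⟨t, rfl⟩
      exact Dvd.intro_left t (by rw [smul_eq_mul])
    · rintro ⟨t, rfl⟩
      exact ⟨t, by rw [smul_eq_mul, mul_comm]⟩
  have hdvd : ∀ m : ℤ, m • hlast ∈ Hn → (k : ℤ) ∣ m := by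
    intro m hm
    have hmS : m ∈ S := hm
    rw [hSmem] at hmS
    exact Int.natAbs_dvd.mpr hmS
  have hkmem : (k : ℤ) • hlast ∈ Hn := by
    have : (k : ℤ) ∈ S := (hSmem _).mpr (Int.dvd_natAbs.mpr dvd_rfl)
    exact this
  set x₀ : ↥Hn := ⟨(k : ℤ) • hlast, hkmem⟩ with hx₀
  -- structure theorem for Hn
  obtain ⟨r, ι, fι, p, hp, e, ⟨Φeq⟩⟩ := AddCommGroup.equiv_free_prod_directSum_zmod ↥Hn
  haveI := fι
  set D : ℕ := Finset.univ.sup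
    (fun i : Fin N => ((Φeq (y i)).1.sum fun _ m => m.natAbs)) with hD
  set ε₀ : ℝ := ε / (D + 1) with hε₀def
  have hε₀ : 0 < ε₀ := by
    rw [hε₀def]
    positivity
  have hDe : (D : ℝ) * ε₀ < ε := by
    have h1 : (D : ℝ) * ε₀ < ((D : ℝ) + 1) * ε₀ :=
      mul_lt_mul_of_pos_right (lt_add_one _) hε₀
    have h2 : ((D : ℝ) + 1) * ε₀ = ε := by
      rw [hε₀def]
      field_simp
    rw [h2] at h1
    exact h1
  -- the corrected difference homomorphism
  have hmain : ∃ (α : ↥Hn →+ ↥G) (btot : ↥G),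
      α x₀ = ψG x₀ - k • btot ∧
      ∀ i : Fin N, ∀ τ : ↥G →+ ℝ, IsPOGroupState u τ → |τ (α (y i))| < ε := by
    rcases Nat.eq_zero_or_pos k with hk0 | hk1
    · refine ⟨0, 0, ?_, ?_⟩
      · have hx0 : x₀ = 0 := by
          apply Subtype.ext
          rw [hx₀]
          simp [hk0]
        rw [hx0]
        simp
      · intro i τ _
        simpa using hε
    · obtain ⟨A, B, hAB, hAbound⟩ :=
        key_construction u hdiv hp (ψG.comp Φeq.symm.toAddMonoidHom) k hk1 ε₀ hε₀
      refine ⟨A.comp Φeq.toAddMonoidHom, B (Φeq x₀), ?_, ?_⟩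
      · have h1 := hAB (Φeq x₀)
        simpa using h1
      · intro i τ hτ
        have h2 := hAbound (Φeq (y i)) τ hτ
        have h3 : ((((Φeq (y i)).1.sum fun _ m => m.natAbs) : ℕ) : ℝ) * ε₀ ≤
            (D : ℝ) * ε₀ := by
          refine mul_le_mul_of_nonneg_right ?_ hε₀.le
          exact_mod_cast Finset.le_sup
            (f := fun i : Fin N => ((Φeq (y i)).1.sum fun _ m => m.natAbs))
            (Finset.mem_univ i)
        calc |τ ((A.comp Φeq.toAddMonoidHom) (y i))|
            = |τ (A (Φeq (y i)))| := rfl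
          _ ≤ _ := h2
          _ ≤ (D : ℝ) * ε₀ := h3
          _ < ε := hDe
  obtain ⟨α, btot, hAx, hAsmall⟩ := hmain
  -- the corrected partial splitting on Hn, and the lift of hlast
  set θt : ↥Hn →+ E := θn + G.subtype.comp α with hθt
  have hθtapp : ∀ w, θt w = θn w + (α w : E) := fun w => rfl
  have hπθt : ∀ w : ↥Hn, π (θt w) = (w : H) := by
    intro w
    rw [hθtapp, map_add, hθn]
    have h1 : π ((α w : E)) = 0 := by
      rw [← AddMonoidHom.mem_ker, hker]
      exact (α w).2
    rw [h1, add_zero]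
  set eE : E := θ' ⟨hlast, hlast_mem⟩ - (btot : E) with heE
  have hπe : π eE = hlast := by
    rw [heE, map_sub, hθ']
    have h1 : π ((btot : E)) = 0 := by
      rw [← AddMonoidHom.mem_ker, hker]
      exact btot.2
    rw [h1, sub_zero]
  have hke : (k : ℤ) • eE = θt x₀ := by
    have hincl : AddSubgroup.inclusion hle x₀ =
        (k : ℤ) • (⟨hlast, hlast_mem⟩ : ↥Hn1) := by
      apply Subtype.ext
      simp [hx₀]
    have h2 : (ψG x₀ : E) = (k : ℤ) • θ' ⟨hlast, hlast_mem⟩ - θn x₀ := by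
      rw [hψGcoe, hψEapp, hincl, map_zsmul]
    have h3 : ((k • btot : ↥G) : E) = (k : ℤ) • (btot : E) := by
      push_cast
      rw [natCast_zsmul]
    rw [hθtapp, hAx, AddSubgroup.coe_sub, h2, h3, heE, smul_sub]
    abel
  -- the sum homomorphism and its descent
  set σ' : ↥Hn × ℤ →+ H :=
    (Hn.subtype.comp (AddMonoidHom.fst _ _)) +
      ((zmultiplesHom H hlast).comp (AddMonoidHom.snd _ _)) with hσ'
  have hσ'apply : ∀ (w : ↥Hn) (m : ℤ), σ' (w, m) = (w : H) + m • hlast :=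
    fun w m => rfl
  set Φ : ↥Hn × ℤ →+ E :=
    (θt.comp (AddMonoidHom.fst _ _)) +
      ((zmultiplesHom E eE).comp (AddMonoidHom.snd _ _)) with hΦ
  have hΦapply : ∀ (w : ↥Hn) (m : ℤ), Φ (w, m) = θt w + m • eE := fun w m => rfl
  have hker0 : ∀ z : ↥Hn × ℤ, σ' z = 0 → Φ z = 0 := by
    rintro ⟨w, m⟩ hz
    rw [hσ'apply] at hz
    have hy : (w : H) = -(m • hlast) := eq_neg_of_add_eq_zero_left hz
    have hm : m • hlast ∈ Hn := by
      have h1 : -(m • hlast) ∈ Hn := hy ▸ w.2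
      simpa using AddSubgroup.neg_mem _ h1
    obtain ⟨t, ht⟩ := hdvd m hm
    have hy' : w = -(t • x₀) := by
      apply Subtype.ext
      rw [hy, ht]
      have h5 : ((-(t • x₀) : ↥Hn) : H) = -(t • ((k : ℤ) • hlast)) := by
        rw [hx₀]
        push_cast
        rfl
      rw [h5, mul_comm, mul_smul]
    rw [hΦapply, hy', map_neg, map_zsmul, ht]
    have h4 : (↑k * t : ℤ) • eE = t • ((k : ℤ) • eE) := by
      rw [mul_comm, mul_smul]
    rw [h4, hke]
    simp
  have hfib : ∀ z w : ↥Hn × ℤ, σ' z = σ' w → Φ z = Φ w := by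
    intro z w hzw
    have h1 : Φ (z - w) = 0 := hker0 _ (by rw [map_sub, hzw, sub_self])
    rw [map_sub, sub_eq_zero] at h1
    exact h1
  have hsurj' : ∀ x : ↥Hn1, ∃ z : ↥Hn × ℤ, σ' z = (x : H) := by
    intro x
    obtain ⟨⟨w1, m1⟩, hz⟩ := hgen (x : H) x.2
    exact ⟨(w1, m1), by rw [hσ'apply]; exact hz⟩
  choose s hs using hsurj'
  set θn1 : ↥Hn1 →+ E :=
    { toFun := fun x => Φ (s x)
      map_zero' := by
        show Φ (s 0) = 0
        have h1 : σ' (s 0) = σ' 0 := by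
          rw [hs, map_zero]
          rfl
        rw [hfib _ _ h1, map_zero]
      map_add' := by
        intro x₁ x₂
        show Φ (s (x₁ + x₂)) = Φ (s x₁) + Φ (s x₂)
        have h1 : σ' (s (x₁ + x₂)) = σ' (s x₁ + s x₂) := by
          rw [map_add, hs, hs, hs]
          rfl
        rw [hfib _ _ h1, map_add] } with hθn1
  have hθn1def : ∀ x, θn1 x = Φ (s x) := fun x => rfl
  have hθn1app : ∀ (z : ↥Hn × ℤ) (x : ↥Hn1), σ' z = (x : H) → θn1 x = Φ z := by
    intro z x hzx
    rw [hθn1def]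
    exact hfib _ _ (by rw [hs, hzx])
  refine ⟨θn1, ?_, ?_⟩
  · intro x
    have h1 : π (θn1 x) = σ' (s x) := by
      rw [hθn1def]
      rcases hsx : s x with ⟨w, m⟩
      rw [hΦapply, hσ'apply, map_add, hπθt, map_zsmul, hπe]
    rw [h1, hs]
  · intro i
    refine ⟨α (y i), ?_, hAsmall i⟩
    have h1 : θn1 (AddSubgroup.inclusion hle (y i)) = Φ (y i, 0) := by
      apply hθn1app
      rw [hσ'apply]
      simp
    rw [h1, hΦapply, hθtapp]
    simp

theorem stmt_2 {E H : Type*} [AddCommGroup E] [AddCommGroup H]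
    (G : AddSubgroup E) [PartialOrder ↥G] [CovariantClass ↥G ↥G (· + ·) (· ≤ ·)]
    (u : ↥G) (hu : 0 ≤ u ∧ ∀ g : ↥G, ∃ n : ℕ, -(n • u) ≤ g ∧ g ≤ n • u)
    (hdiv : TraciallyApproxDivisible u)
    (π : E →+ H) (hsurj : Function.Surjective π) (hker : π.ker = G)
    (hpure : ∀ H' : AddSubgroup H, H'.FG →
      ∃ θ' : ↥H' →+ E, ∀ x : ↥H', π (θ' x) = (x : H))
    (n : ℕ) (h : Fin (n + 1) → H)
    (θn : ↥(AddSubgroup.closure (Set.range fun i : Fin n => h i.castSucc)) →+ E)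
    (hθn : ∀ x, π (θn x) = (x : H))
    (ε : ℝ) (hε : 0 < ε) :
    ∃ θn1 : ↥(AddSubgroup.closure (Set.range h)) →+ E,
      (∀ x, π (θn1 x) = (x : H)) ∧
      ∀ i : Fin n, ∃ g : ↥G,
        θn1 ⟨h i.castSucc, AddSubgroup.subset_closure ⟨i.castSucc, rfl⟩⟩ -
            θn ⟨h i.castSucc, AddSubgroup.subset_closure ⟨i, rfl⟩⟩ = (g : E) ∧
        ∀ τ : ↥G →+ ℝ, IsPOGroupState u τ → |τ g| < ε := by
  classical
  have hle : AddSubgroup.closure (Set.range fun i : Fin n => h i.castSucc) ≤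
      AddSubgroup.closure (Set.range h) := by
    apply AddSubgroup.closure_mono
    rintro x ⟨i, rfl⟩
    exact ⟨i.castSucc, rfl⟩
  have hlast_mem : h (Fin.last n) ∈ AddSubgroup.closure (Set.range h) :=
    AddSubgroup.subset_closure ⟨Fin.last n, rfl⟩
  have memHn : ∀ i : Fin n,
      h i.castSucc ∈ AddSubgroup.closure (Set.range fun i : Fin n => h i.castSucc) :=
    fun i => AddSubgroup.subset_closure ⟨i, rfl⟩
  haveI : Finite ↥(Set.range h) := (Set.finite_range h).to_subtype
  haveI : Finite ↥(Set.range fun i : Fin n => h i.castSucc) :=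
    (Set.finite_range _).to_subtype
  haveI hfg1 : AddGroup.FG ↥(AddSubgroup.closure (Set.range h)) := inferInstance
  haveI hfgn : AddGroup.FG
      ↥(AddSubgroup.closure (Set.range fun i : Fin n => h i.castSucc)) := inferInstance
  have hFG : (AddSubgroup.closure (Set.range h)).FG :=
    (AddGroup.fg_iff_addSubgroup_fg _).mp hfg1
  obtain ⟨θ', hθ'⟩ := hpure _ hFG
  have hgen : ∀ w ∈ AddSubgroup.closure (Set.range h),
      ∃ z : ↥(AddSubgroup.closure (Set.range fun i : Fin n => h i.castSucc)) × ℤ,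
        ((z.1 : H) + z.2 • h (Fin.last n) = w) := by
    intro w hw
    induction hw using AddSubgroup.closure_induction with
    | mem g hg =>
      obtain ⟨j, rfl⟩ := hg
      induction j using Fin.lastCases with
      | last =>
        refine ⟨(0, 1), ?_⟩
        simp
      | cast i =>
        refine ⟨(⟨h i.castSucc, memHn i⟩, 0), ?_⟩
        simp
    | zero => exact ⟨(0, 0), by simp⟩
    | add w₁ w₂ hw₁ hw₂ ih₁ ih₂ =>
      obtain ⟨z₁, hz₁⟩ := ih₁
      obtain ⟨z₂, hz₂⟩ := ih₂
      refine ⟨z₁ + z₂, ?_⟩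
      rw [← hz₁, ← hz₂]
      simp only [Prod.fst_add, Prod.snd_add, AddSubgroup.coe_add, add_zsmul]
      abel
    | neg w₁ hw₁ ih₁ =>
      obtain ⟨z₁, hz₁⟩ := ih₁
      refine ⟨-z₁, ?_⟩
      rw [← hz₁]
      simp only [Prod.fst_neg, Prod.snd_neg, AddSubgroup.coe_neg, neg_zsmul]
      abel
  obtain ⟨θn1, h1, h2⟩ := smalltrace_aux G u hdiv π hker _ _ hle (h (Fin.last n))
    hlast_mem hgen hfgn θ' hθ' θn hθn n
    (fun i => ⟨h i.castSucc, memHn i⟩) ε hε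
  refine ⟨θn1, h1, ?_⟩
  intro i
  obtain ⟨g, hg1, hg2⟩ := h2 i
  exact ⟨g, hg1, hg2⟩
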